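/- Let Y ≥ 1 and d ≥ 2 be an integer, and set D = 2^{d-1}. For every real γ, |∑_{1 ≤ y ≤ Y} e(γ y^d)|^D ≤ (2Y)^{D-d} ∑_{|h_1| < Y} ⋯ ∑_{|h_{d-1}| < Y} |∑_{y ∈ I(h)} e(d! h_1 ⋯ h_{d-1} y γ)|, where I(h) is an interval of integers contained in [1, Y] depending on h = (h_1,…,h_{d-1}). -/

import Mathlib

/-- `e(α) = exp(2πiα)`. -/
noncomputable def eTwoPi (x : ℝ) : ℂ := Complex.exp (2 * Real.pi * Complex.I * x)

lemma eTwoPi_add (x y : ℝ) : eTwoPi (x + y) = eTwoPi x * eTwoPi y := by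
  unfold eTwoPi; rw [← Complex.exp_add]; push_cast; ring_nf

lemma norm_eTwoPi (x : ℝ) : ‖eTwoPi x‖ = 1 := by
  unfold eTwoPi; rw [Complex.norm_exp]; simp

lemma conj_eTwoPi (x : ℝ) : (starRingEnd ℂ) (eTwoPi x) = eTwoPi (-x) := by
  unfold eTwoPi
  rw [← Complex.exp_conj]
  congr 1
  simp only [map_mul, Complex.conj_I, Complex.conj_ofReal, map_ofNat]
  push_cast
  ring

lemma sq_step (N : ℕ) (f : ℤ → ℝ) (a b : ℤ)
    (hsub : Finset.Icc a b ⊆ Finset.Icc (1:ℤ) N) :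
    ‖∑ y ∈ Finset.Icc a b, eTwoPi (f y)‖ ^ 2 ≤
      ∑ h ∈ Finset.Icc (-(N:ℤ)+1) ((N:ℤ)-1),
        ‖∑ y ∈ Finset.Icc (max a (a - h)) (min b (b - h)), eTwoPi (f (y + h) - f y)‖ := by
  set S := ∑ y ∈ Finset.Icc a b, eTwoPi (f y) with hS
  have hmem : ∀ y ∈ Finset.Icc a b, 1 ≤ y ∧ y ≤ (N:ℤ) := by
    intro y hy
    have := hsub hy
    simpa using this
  have key : S * (starRingEnd ℂ) S =
      ∑ h ∈ Finset.Icc (-(N:ℤ)+1) ((N:ℤ)-1),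
        ∑ y ∈ Finset.Icc (max a (a - h)) (min b (b - h)), eTwoPi (f (y + h) - f y) := by
    rw [hS, map_sum, Finset.sum_mul_sum]
    have step1 : ∀ z ∈ Finset.Icc a b, ∀ y ∈ Finset.Icc a b,
        eTwoPi (f z) * (starRingEnd ℂ) (eTwoPi (f y)) = eTwoPi (f z - f y) := by
      intro z _ y _
      rw [conj_eTwoPi, ← eTwoPi_add, sub_eq_add_neg]
    rw [Finset.sum_congr rfl fun z hz => Finset.sum_congr rfl fun y hy => step1 z hz y hy]
    rw [← Finset.sum_product', Finset.sum_sigma']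
    refine Finset.sum_nbij' (fun p => ⟨p.1 - p.2, p.2⟩) (fun q => (q.2 + q.1, q.2)) ?_ ?_ ?_ ?_ ?_
    · rintro ⟨z, y⟩ hp
      simp only [Finset.mem_product, Finset.mem_Icc] at hp
      have h1 := hmem z (Finset.mem_Icc.mpr hp.1)
      have h2 := hmem y (Finset.mem_Icc.mpr hp.2)
      simp only [Finset.mem_sigma, Finset.mem_Icc, le_max_iff, max_le_iff, le_min_iff,
        min_le_iff]
      constructor
      · omega
      · constructor <;> omega
    · rintro ⟨h, y⟩ hq
      simp only [Finset.mem_sigma, Finset.mem_Icc, max_le_iff, le_min_iff] at hq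
      simp only [Finset.mem_product, Finset.mem_Icc]
      omega
    · rintro ⟨z, y⟩ _
      simp only
      congr 1
      omega
    · rintro ⟨h, y⟩ _
      simp only
      congr 1 <;> omega
    · rintro ⟨z, y⟩ _
      have h3 : y + (z - y) = z := by ring
      simp only [h3]
  have h1 : ‖S‖ ^ 2 = ‖S * (starRingEnd ℂ) S‖ := by
    rw [norm_mul, RCLike.norm_conj, sq]
  rw [h1, key]
  exact norm_sum_le _ _

open Polynomial in
lemma coeff_comp_X_add_C (p : Polynomial ℤ) (c : ℤ) (m : ℕ) :
    (p.comp (X + C c)).coeff m =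
      ∑ i ∈ Finset.range (p.natDegree + 1), p.coeff i * (c ^ (i - m) * (i.choose m : ℤ)) := by
  rw [Polynomial.comp_eq_sum_left]
  rw [Polynomial.sum_over_range' (n := p.natDegree + 1) _ (by intro n; simp) (Nat.lt_succ_self _)]
  rw [Polynomial.finset_sum_coeff]
  refine Finset.sum_congr rfl fun i _ => ?_
  rw [Polynomial.coeff_C_mul, Polynomial.coeff_X_add_C_pow]

open Polynomial in
lemma diff_step (p : Polynomial ℤ) (c : ℤ) (n : ℕ) (hdeg : p.natDegree ≤ n + 1) :
    (p.comp (X + C c) - p).natDegree ≤ n ∧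
    (p.comp (X + C c) - p).coeff n = ((n : ℤ) + 1) * c * p.coeff (n + 1) := by
  have hsum : ∀ m : ℕ, (p.comp (X + C c)).coeff m =
      ∑ i ∈ Finset.range (n + 2), p.coeff i * (c ^ (i - m) * (i.choose m : ℤ)) := by
    intro m
    rw [coeff_comp_X_add_C]
    apply Finset.sum_subset
    · intro i hi
      simp only [Finset.mem_range] at hi ⊢
      omega
    · intro i _ hi
      simp only [Finset.mem_range] at hi
      have : p.natDegree < i := by omega
      rw [Polynomial.coeff_eq_zero_of_natDegree_lt this, zero_mul]
  have hcn : (p.comp (X + C c)).coeff n = p.coeff n + ((n : ℤ) + 1) * c * p.coeff (n + 1) := by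
    rw [hsum n, Finset.sum_range_succ, Finset.sum_range_succ]
    have hz : ∑ i ∈ Finset.range n, p.coeff i * (c ^ (i - n) * (i.choose n : ℤ)) = 0 := by
      apply Finset.sum_eq_zero
      intro i hi
      simp only [Finset.mem_range] at hi
      rw [Nat.choose_eq_zero_of_lt hi]
      simp
    rw [hz]
    simp [Nat.choose_succ_self_right]
    ring
  have hcn1 : (p.comp (X + C c)).coeff (n + 1) = p.coeff (n + 1) := by
    rw [hsum (n + 1), Finset.sum_range_succ]
    have hz : ∑ i ∈ Finset.range (n + 1), p.coeff i * (c ^ (i - (n+1)) * (i.choose (n+1) : ℤ)) = 0 := by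
      apply Finset.sum_eq_zero
      intro i hi
      simp only [Finset.mem_range] at hi
      rw [Nat.choose_eq_zero_of_lt hi]
      simp
    rw [hz]
    simp
  constructor
  · rw [Polynomial.natDegree_le_iff_coeff_eq_zero]
    intro m hm
    rcases Nat.lt_or_ge m (n + 2) with hm2 | hm2
    · have : m = n + 1 := by omega
      subst this
      rw [Polynomial.coeff_sub, hcn1, sub_self]
    · have hdc : (p.comp (X + C c)).natDegree ≤ n + 1 := by
        refine le_trans (Polynomial.natDegree_comp_le) ?_
        have : (X + C c : Polynomial ℤ).natDegree ≤ 1 := le_of_eq (Polynomial.natDegree_X_add_C c)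
        calc p.natDegree * (X + C c : Polynomial ℤ).natDegree ≤ (n+1) * 1 :=
              Nat.mul_le_mul hdeg this
          _ = n + 1 := by ring
      rw [Polynomial.coeff_sub, Polynomial.coeff_eq_zero_of_natDegree_lt (by omega : (p.comp (X + C c)).natDegree < m),
        Polynomial.coeff_eq_zero_of_natDegree_lt (by omega : p.natDegree < m), sub_self]
  · rw [Polynomial.coeff_sub, hcn]
    ring

def itD : {k : ℕ} → (Fin k → ℤ) → (ℤ → ℝ) → ℤ → ℝ
  | 0, _, f => f
  | _ + 1, h, f => itD (Fin.tail h) (fun y => f (y + h 0) - f y)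

open Polynomial in
noncomputable def itDiffP : {k : ℕ} → (Fin k → ℤ) → Polynomial ℤ → Polynomial ℤ
  | 0, _, p => p
  | _ + 1, h, p => itDiffP (Fin.tail h) (p.comp (X + C (h 0)) - p)

lemma itD_zero (h : Fin 0 → ℤ) (f : ℤ → ℝ) : itD h f = f := rfl

lemma itD_succ {k : ℕ} (h : Fin (k+1) → ℤ) (f : ℤ → ℝ) :
    itD h f = itD (Fin.tail h) (fun y => f (y + h 0) - f y) := rfl

open Polynomial in
lemma itD_eval : ∀ (k : ℕ) (h : Fin k → ℤ) (γ : ℝ) (p : Polynomial ℤ),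
    itD h (fun z => γ * ((p.eval z : ℤ) : ℝ)) = fun y => γ * (((itDiffP h p).eval y : ℤ) : ℝ)
  | 0, h, γ, p => rfl
  | k + 1, h, γ, p => by
    rw [itD_succ]
    have : (fun y => (fun z => γ * ((p.eval z : ℤ) : ℝ)) (y + h 0) - (fun z => γ * ((p.eval z : ℤ) : ℝ)) y)
        = fun z => γ * (((p.comp (X + C (h 0)) - p).eval z : ℤ) : ℝ) := by
      funext z
      simp only [Polynomial.eval_sub, Polynomial.eval_comp, Polynomial.eval_add,
        Polynomial.eval_X, Polynomial.eval_C]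
      push_cast
      ring
    rw [this, itD_eval k (Fin.tail h) γ _]
    rfl

lemma itDiffP_zero (h : Fin 0 → ℤ) (p : Polynomial ℤ) : itDiffP h p = p := rfl

open Polynomial in
lemma itDiffP_succ {k : ℕ} (h : Fin (k+1) → ℤ) (p : Polynomial ℤ) :
    itDiffP h p = itDiffP (Fin.tail h) (p.comp (X + C (h 0)) - p) := rfl


open Polynomial in
lemma itDiffP_spec : ∀ (k : ℕ) (h : Fin k → ℤ) (n : ℕ) (p : Polynomial ℤ),
    p.natDegree ≤ n + k →
    (itDiffP h p).natDegree ≤ n ∧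
    (itDiffP h p).coeff n = (((n+k).descFactorial k : ℤ)) * (∏ i, h i) * p.coeff (n + k)
  | 0, h, n, p, hdeg => by
    rw [itDiffP_zero]
    simp only [Nat.descFactorial_zero, Nat.cast_one, Nat.add_zero]
    constructor
    · simpa using hdeg
    · simp
  | k + 1, h, n, p, hdeg => by
    rw [itDiffP_succ]
    set q := p.comp (X + C (h 0)) - p with hq
    have hstep := diff_step p (h 0) (n + k) (by omega)
    have hIH := itDiffP_spec k (Fin.tail h) n q hstep.1
    refine ⟨hIH.1, ?_⟩
    rw [hIH.2, hstep.2]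
    have hdf : ((n + (k+1)).descFactorial (k+1) : ℤ) = ((n + k : ℕ) + 1 : ℤ) * ((n+k).descFactorial k : ℤ) := by
      have : (n + (k+1)) = (n + k) + 1 := by omega
      rw [this, Nat.succ_descFactorial_succ]
      push_cast
      ring
    have hprod : (∏ i, h i) = h 0 * ∏ i, Fin.tail h i := by
      rw [Fin.prod_univ_succ]
      rfl
    rw [hdf, hprod]
    have : n + (k + 1) = n + k + 1 := by omega
    rw [this]
    push_cast
    ring

lemma sum_piFinset_cons {M : Type*} [AddCommMonoid M] {k : ℕ} (s : Finset ℤ)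
    (g : (Fin (k+1) → ℤ) → M) :
    ∑ h ∈ Fintype.piFinset (fun _ : Fin (k+1) => s), g h =
      ∑ x ∈ s, ∑ h' ∈ Fintype.piFinset (fun _ : Fin k => s), g (Fin.cons x h') := by
  rw [← Finset.sum_product']
  refine Finset.sum_nbij' (fun h => (h 0, Fin.tail h)) (fun p => Fin.cons p.1 p.2) ?_ ?_ ?_ ?_ ?_
  · intro h hh
    rw [Fin.mem_piFinset_iff_zero_tail] at hh
    simpa [Fin.tail] using hh
  · intro p hp
    simp only [Finset.mem_product] at hp
    rw [Fin.mem_piFinset_iff_zero_tail]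
    simpa [Fin.tail] using hp
  · intro h _
    exact Fin.cons_self_tail h
  · intro p _
    simp
  · intro h _
    rw [Fin.cons_self_tail]

set_option maxHeartbeats 1000000 in
lemma weyl_iter (N : ℕ) (hN : 1 ≤ N) : ∀ (k : ℕ) (f : ℤ → ℝ) (a b : ℤ),
    Finset.Icc a b ⊆ Finset.Icc (1:ℤ) N →
    ∃ J : (Fin k → ℤ) → Finset ℤ,
      (∀ h, ∃ a' b' : ℤ, J h = Finset.Icc a' b') ∧
      (∀ h, J h ⊆ Finset.Icc (1:ℤ) N) ∧
      ‖∑ y ∈ Finset.Icc a b, eTwoPi (f y)‖ ^ (2^k) ≤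
        (2*(N:ℝ))^(2^k - (k+1)) *
          ∑ h ∈ Fintype.piFinset (fun _ : Fin k => Finset.Icc (-(N:ℤ)+1) ((N:ℤ)-1)),
            ‖∑ y ∈ J h, eTwoPi (itD h f y)‖ := by
  intro k
  induction k with
  | zero =>
    intro f a b hsub
    refine ⟨fun _ => Finset.Icc a b, fun h => ⟨a, b, rfl⟩, fun h => hsub, ?_⟩
    simp only [pow_zero, pow_one, Nat.sub_self, one_mul]
    have huniv : (Fintype.piFinset (fun _ : Fin 0 => Finset.Icc (-(N:ℤ)+1) ((N:ℤ)-1))) =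
        {(Fin.elim0 : Fin 0 → ℤ)} := by
      ext g
      simp only [Fintype.mem_piFinset, Finset.mem_singleton]
      exact iff_of_true (fun i => i.elim0) (Subsingleton.elim g _)
    rw [huniv, Finset.sum_singleton, itD_zero]
    norm_num
  | succ k ih =>
    intro f a b hsub
    -- for each shift h0, the differenced interval and function
    have hIH : ∀ h0 : ℤ, ∃ J : (Fin k → ℤ) → Finset ℤ,
        (∀ h, ∃ a' b' : ℤ, J h = Finset.Icc a' b') ∧
        (∀ h, J h ⊆ Finset.Icc (1:ℤ) N) ∧
        ‖∑ y ∈ Finset.Icc (max a (a - h0)) (min b (b - h0)),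
            eTwoPi ((fun y => f (y + h0) - f y) y)‖ ^ (2^k) ≤
          (2*(N:ℝ))^(2^k - (k+1)) *
            ∑ h ∈ Fintype.piFinset (fun _ : Fin k => Finset.Icc (-(N:ℤ)+1) ((N:ℤ)-1)),
              ‖∑ y ∈ J h, eTwoPi (itD h (fun y => f (y + h0) - f y) y)‖ := by
      intro h0
      apply ih
      refine subset_trans ?_ hsub
      apply Finset.Icc_subset_Icc (le_max_left a (a - h0)) (min_le_left b (b - h0))
    choose J hJ1 hJ2 hJ3 using hIH
    refine ⟨fun h => J (h 0) (Fin.tail h), fun h => hJ1 (h 0) (Fin.tail h),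
      fun h => hJ2 (h 0) (Fin.tail h), ?_⟩
    set H := Finset.Icc (-(N:ℤ)+1) ((N:ℤ)-1) with hH
    have hcard : (H.card : ℝ) ≤ 2 * N := by
      rw [hH, Int.card_Icc]
      have : ((N:ℤ) - 1 + 1 - (-(N:ℤ)+1)).toNat = 2*N - 1 := by omega
      rw [this]
      push_cast
      have : (1:ℝ) ≤ N := by exact_mod_cast hN
      push_cast [Nat.cast_sub (by omega : 1 ≤ 2*N)]
      linarith
    have hk1 : k + 1 ≤ 2^k := Nat.succ_le_of_lt (Nat.lt_two_pow_self (n := k))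
    have hcard0 : (0:ℝ) < H.card := by
      have : (0:ℤ) ∈ H := by
        rw [hH]
        simp only [Finset.mem_Icc]
        omega
      have := Finset.card_pos.mpr ⟨0, this⟩
      exact_mod_cast this
    set S := ∑ y ∈ Finset.Icc a b, eTwoPi (f y) with hSdef
    have hS2 := sq_step N f a b hsub
    have step1 : ‖S‖ ^ (2^(k+1)) = (‖S‖^2)^(2^k) := by
      rw [← pow_mul]
      congr 1
      rw [pow_succ]
      ring
    have step2 : (‖S‖^2)^(2^k) ≤
        (∑ h0 ∈ H, ‖∑ y ∈ Finset.Icc (max a (a - h0)) (min b (b - h0)),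
          eTwoPi (f (y + h0) - f y)‖)^(2^k) :=
      pow_le_pow_left₀ (by positivity) hS2 _
    have step3 : (∑ h0 ∈ H, ‖∑ y ∈ Finset.Icc (max a (a - h0)) (min b (b - h0)),
          eTwoPi (f (y + h0) - f y)‖)^(2^k) ≤
        (H.card : ℝ)^(2^k - 1) * ∑ h0 ∈ H, ‖∑ y ∈ Finset.Icc (max a (a - h0)) (min b (b - h0)),
          eTwoPi (f (y + h0) - f y)‖^(2^k) := by
      have := pow_sum_div_card_le_sum_pow
        (f := fun h0 => ‖∑ y ∈ Finset.Icc (max a (a - h0)) (min b (b - h0)),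
          eTwoPi (f (y + h0) - f y)‖) (s := H) (fun i _ => norm_nonneg _) (2^k - 1)
      rw [div_le_iff₀ (by positivity)] at this
      have h2k : 2^k - 1 + 1 = 2^k := by omega
      rw [h2k] at this
      calc _ ≤ (∑ h0 ∈ H, ‖∑ y ∈ Finset.Icc (max a (a - h0)) (min b (b - h0)),
            eTwoPi (f (y + h0) - f y)‖^(2^k)) * (H.card : ℝ)^(2^k - 1) := this
        _ = _ := by ring
    have step5 : ∑ h0 ∈ H, ‖∑ y ∈ Finset.Icc (max a (a - h0)) (min b (b - h0)),
          eTwoPi (f (y + h0) - f y)‖^(2^k) ≤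
        (2*(N:ℝ))^(2^k - (k+1)) * ∑ h0 ∈ H,
          ∑ h' ∈ Fintype.piFinset (fun _ : Fin k => Finset.Icc (-(N:ℤ)+1) ((N:ℤ)-1)),
            ‖∑ y ∈ J h0 h', eTwoPi (itD h' (fun y => f (y + h0) - f y) y)‖ := by
      rw [Finset.mul_sum]
      exact Finset.sum_le_sum fun h0 _ => hJ3 h0
    have hsumeq : ∑ h ∈ Fintype.piFinset (fun _ : Fin (k+1) => H),
        ‖∑ y ∈ J (h 0) (Fin.tail h), eTwoPi (itD h f y)‖ =
        ∑ h0 ∈ H, ∑ h' ∈ Fintype.piFinset (fun _ : Fin k => Finset.Icc (-(N:ℤ)+1) ((N:ℤ)-1)),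
            ‖∑ y ∈ J h0 h', eTwoPi (itD h' (fun y => f (y + h0) - f y) y)‖ := by
      rw [sum_piFinset_cons (s := H)
        (g := fun h => ‖∑ y ∈ J (h 0) (Fin.tail h), eTwoPi (itD h f y)‖)]
      refine Finset.sum_congr rfl fun h0 _ => Finset.sum_congr (by rw [hH]) fun h' _ => ?_
      rw [itD_succ]
      simp only [Fin.cons_zero, Fin.tail_cons]
    have hsum_nonneg : (0:ℝ) ≤ ∑ h0 ∈ H,
        ∑ h' ∈ Fintype.piFinset (fun _ : Fin k => Finset.Icc (-(N:ℤ)+1) ((N:ℤ)-1)),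
          ‖∑ y ∈ J h0 h', eTwoPi (itD h' (fun y => f (y + h0) - f y) y)‖ := by
      positivity
    have hNpos : (0:ℝ) ≤ 2 * N := by positivity
    calc ‖S‖ ^ (2^(k+1)) = (‖S‖^2)^(2^k) := step1
      _ ≤ _ := step2
      _ ≤ _ := step3
      _ ≤ (2*(N:ℝ))^(2^k - 1) * ∑ h0 ∈ H, ‖∑ y ∈ Finset.Icc (max a (a - h0)) (min b (b - h0)),
            eTwoPi (f (y + h0) - f y)‖^(2^k) := by
        refine mul_le_mul_of_nonneg_right (pow_le_pow_left₀ (Nat.cast_nonneg _) hcard _)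
          (Finset.sum_nonneg fun i _ => pow_nonneg (norm_nonneg _) _)
      _ ≤ (2*(N:ℝ))^(2^k - 1) * ((2*(N:ℝ))^(2^k - (k+1)) * ∑ h0 ∈ H,
          ∑ h' ∈ Fintype.piFinset (fun _ : Fin k => Finset.Icc (-(N:ℤ)+1) ((N:ℤ)-1)),
            ‖∑ y ∈ J h0 h', eTwoPi (itD h' (fun y => f (y + h0) - f y) y)‖) := by
        exact mul_le_mul_of_nonneg_left step5 (pow_nonneg hNpos _)
      _ = (2*(N:ℝ))^(2^(k+1) - (k+1+1)) * ∑ h ∈ Fintype.piFinset (fun _ : Fin (k+1) => H),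
          ‖∑ y ∈ J (h 0) (Fin.tail h), eTwoPi (itD h f y)‖ := by
        rw [hsumeq, ← mul_assoc, ← pow_add]
        congr 2
        have h2 : 2^(k+1) = 2^k + 2^k := by rw [pow_succ]; omega
        omega

open Polynomial in
/-- Weyl's differencing inequality: with `D = 2^{d-1}`,
`|∑_{1≤y≤Y} e(γ y^d)|^D ≤ (2Y)^{D-d} ∑_{|h₁|<Y} ⋯ ∑_{|h_{d-1}|<Y} |∑_{y ∈ I(h)} e(d! h₁⋯h_{d-1} y γ)|`,
where each `I(h)` is an interval of integers contained in `[1,Y]`. -/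
theorem stmt_10 (Y : ℝ) (hY : 1 ≤ Y) (d : ℕ) (hd : 2 ≤ d) (γ : ℝ) :
    ∃ I : (Fin (d - 1) → ℤ) → Finset ℤ,
      (∀ h, ∃ a b : ℤ, I h = Finset.Icc a b) ∧
      (∀ h, ∀ y ∈ I h, 1 ≤ y ∧ (y : ℝ) ≤ Y) ∧
      ‖∑ y ∈ Finset.Icc 1 ⌊Y⌋₊, eTwoPi (γ * (y : ℝ) ^ d)‖ ^ (2 ^ (d - 1)) ≤
        (2 * Y) ^ (2 ^ (d - 1) - d) *
          ∑ h ∈ Fintype.piFinset (fun _ : Fin (d - 1) => Finset.Ioo (-⌈Y⌉) ⌈Y⌉),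
            ‖∑ y ∈ I h, eTwoPi ((d.factorial : ℝ) * (∏ j, (h j : ℝ)) * (y : ℝ) * γ)‖ := by
  have hY0 : (0:ℝ) ≤ Y := by linarith
  set N := ⌊Y⌋₊ with hNdef
  have hN : 1 ≤ N := Nat.le_floor (by exact_mod_cast hY)
  set f : ℤ → ℝ := fun z => γ * ((z:ℝ))^d with hf
  obtain ⟨J, hJ1, hJ2, hJ3⟩ := weyl_iter N hN (d-1) f 1 N (subset_refl _)
  set Hs := Finset.Icc (-(N:ℤ)+1) ((N:ℤ)-1) with hHs
  -- integrand conversion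
  have hint : ∀ (h : Fin (d-1) → ℤ) (s : Finset ℤ),
      ‖∑ y ∈ s, eTwoPi (itD h f y)‖ =
      ‖∑ y ∈ s, eTwoPi ((d.factorial : ℝ) * (∏ j, (h j : ℝ)) * (y : ℝ) * γ)‖ := by
    intro h s
    set q := itDiffP h (X^d : Polynomial ℤ) with hqdef
    have hdeg : (X^d : Polynomial ℤ).natDegree ≤ 1 + (d-1) := by
      rw [Polynomial.natDegree_X_pow]
      omega
    have hspec := itDiffP_spec (d-1) h 1 (X^d) hdeg
    have h1d : 1 + (d - 1) = d := by omega
    have hcoeffd : (X^d : Polynomial ℤ).coeff (1 + (d-1)) = 1 := by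
      rw [h1d, Polynomial.coeff_X_pow, if_pos rfl]
    have hdf : d.descFactorial (d-1) = d.factorial := by
      have h2 := Nat.descFactorial_succ d (d-1)
      have h3 : d - 1 + 1 = d := by omega
      rw [h3] at h2
      have h4 := Nat.descFactorial_self d
      have h5 : d - (d - 1) = 1 := by omega
      rw [h5, one_mul] at h2
      omega
    have hc1 : q.coeff 1 = (d.factorial : ℤ) * (∏ i, h i) := by
      rw [hqdef, hspec.2, hcoeffd, h1d, hdf]
      ring
    have heval : ∀ y : ℤ, q.eval y = q.coeff 0 + q.coeff 1 * y := by
      intro y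
      rw [Polynomial.eval_eq_sum_range' (Nat.lt_succ_of_le hspec.1)]
      simp [Finset.sum_range_succ]
      rfl
    have hfeq : f = fun z => γ * (((X^d : Polynomial ℤ).eval z : ℤ) : ℝ) := by
      funext z
      rw [hf]
      push_cast
      simp
    have hfun : itD h f = fun y => γ * ((q.eval y : ℤ) : ℝ) := by
      rw [hfeq, itD_eval]
    have hterm : ∀ y : ℤ, eTwoPi (itD h f y) =
        eTwoPi (γ * ((q.coeff 0 : ℤ) : ℝ)) *
          eTwoPi ((d.factorial : ℝ) * (∏ j, (h j : ℝ)) * (y : ℝ) * γ) := by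
      intro y
      rw [hfun]
      simp only []
      rw [← eTwoPi_add]
      congr 1
      rw [heval y, hc1]
      push_cast
      ring
    rw [Finset.sum_congr rfl fun y _ => hterm y, ← Finset.mul_sum, norm_mul, norm_eTwoPi,
      one_mul]
  -- LHS index conversion
  have hLHS : ∑ y ∈ Finset.Icc 1 ⌊Y⌋₊, eTwoPi (γ * (y : ℝ) ^ d) =
      ∑ y ∈ Finset.Icc (1:ℤ) (N:ℤ), eTwoPi (f y) := by
    refine Finset.sum_nbij' (fun n => (n:ℤ)) (fun z => z.toNat) ?_ ?_ ?_ ?_ ?_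
    · intro x hx
      simp only [Finset.mem_Icc] at hx ⊢
      omega
    · intro z hz
      simp only [Finset.mem_Icc] at hz ⊢
      omega
    · intro x _
      simp
    · intro z hz
      simp only [Finset.mem_Icc] at hz
      omega
    · intro x _
      rw [hf]
      push_cast
      rfl
  -- bounds
  have hNceil : (N:ℤ) ≤ ⌈Y⌉ := by
    have h1 : (N:ℝ) ≤ Y := Nat.floor_le hY0
    have h2 : Y ≤ (⌈Y⌉:ℝ) := Int.le_ceil Y
    exact_mod_cast le_trans h1 h2
  have hsubset : Fintype.piFinset (fun _ : Fin (d-1) => Hs) ⊆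
      Fintype.piFinset (fun _ : Fin (d-1) => Finset.Ioo (-⌈Y⌉) ⌈Y⌉) := by
    apply Fintype.piFinset_subset
    intro _ z hz
    rw [hHs] at hz
    simp only [Finset.mem_Icc] at hz
    simp only [Finset.mem_Ioo]
    omega
  refine ⟨fun h => if h ∈ Fintype.piFinset (fun _ : Fin (d-1) => Hs) then J h else ∅,
    ?_, ?_, ?_⟩
  · intro h
    simp only []
    by_cases hmem : h ∈ Fintype.piFinset (fun _ : Fin (d-1) => Hs)
    · rw [if_pos hmem]; exact hJ1 h
    · exact ⟨1, 0, by rw [if_neg hmem, Finset.Icc_eq_empty (by norm_num)]⟩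
  · intro h y hy
    simp only [] at hy
    by_cases hmem : h ∈ Fintype.piFinset (fun _ : Fin (d-1) => Hs)
    · rw [if_pos hmem] at hy
      have := hJ2 h hy
      simp only [Finset.mem_Icc] at this
      refine ⟨this.1, ?_⟩
      have h1 : (y:ℝ) ≤ (N:ℝ) := by exact_mod_cast this.2
      exact le_trans h1 (Nat.floor_le hY0)
    · rw [if_neg hmem] at hy
      simp at hy
  · simp only []
    rw [hLHS]
    have hd1 : d - 1 + 1 = d := by omega
    rw [hd1] at hJ3
    refine le_trans hJ3 ?_
    have hpow : (2*(N:ℝ))^(2^(d-1) - d) ≤ (2*Y)^(2^(d-1) - d) := by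
      apply pow_le_pow_left₀ (by positivity)
      have : (N:ℝ) ≤ Y := Nat.floor_le hY0
      linarith
    have hsum : ∑ h ∈ Fintype.piFinset (fun _ : Fin (d-1) => Hs),
        ‖∑ y ∈ J h, eTwoPi (itD h f y)‖ ≤
        ∑ h ∈ Fintype.piFinset (fun _ : Fin (d-1) => Finset.Ioo (-⌈Y⌉) ⌈Y⌉),
          ‖∑ y ∈ (if h ∈ Fintype.piFinset (fun _ : Fin (d-1) => Hs) then J h else ∅),
            eTwoPi ((d.factorial : ℝ) * (∏ j, (h j : ℝ)) * (y : ℝ) * γ)‖ := by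
      have heq : ∀ h ∈ Fintype.piFinset (fun _ : Fin (d-1) => Hs),
          ‖∑ y ∈ J h, eTwoPi (itD h f y)‖ =
          ‖∑ y ∈ (if h ∈ Fintype.piFinset (fun _ : Fin (d-1) => Hs) then J h else ∅),
            eTwoPi ((d.factorial : ℝ) * (∏ j, (h j : ℝ)) * (y : ℝ) * γ)‖ := by
        intro h hmem
        rw [if_pos hmem, hint h (J h)]
      rw [Finset.sum_congr rfl heq]
      exact Finset.sum_le_sum_of_subset_of_nonneg hsubset fun _ _ _ => norm_nonneg _
    have hsnn : (0:ℝ) ≤ ∑ h ∈ Fintype.piFinset (fun _ : Fin (d-1) => Hs),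
        ‖∑ y ∈ J h, eTwoPi (itD h f y)‖ :=
      Finset.sum_nonneg fun _ _ => norm_nonneg _
    exact mul_le_mul hpow hsum hsnn (by positivity)
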